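/- Let q ≥ 2 and l ≥ 1 be integers, and let m₀, m₁, m₂, m₃ be positive real numbers with 1 ≤ m₀, m₂, m₃ < q and 0 < m₁ < l⁻¹(6q)^(-l). Write t(x) = m₃x³ + m₂x² − m₁x + m₀ and let c₀, c₁, …, c_{3l} be the coefficients of the polynomial t(x)^l, so t(x)^l = Σ_{i=0}^{3l} c_i x^i. Then c_i > 0 for every i ∈ {0, 2, 3, …, 3l}, c₁ < 0, and |c_i| ≤ (4q)^l for every i with 0 ≤ i ≤ 3l. -/

import Mathlib

open Polynomial Finset
set_option maxHeartbeats 1000000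

private lemma aux_choose_le (l k : ℕ) : l.choose k ≤ 2 ^ l := by
  rcases le_or_gt k l with h | h
  · calc l.choose k ≤ ∑ j ∈ range (l+1), l.choose j :=
        Finset.single_le_sum (fun j _ => Nat.zero_le _) (Finset.mem_range.mpr (by omega))
    _ = 2 ^ l := Nat.sum_range_choose l
  · simp [Nat.choose_eq_zero_of_lt h]

private lemma aux_coeff_mul_s (p : Polynomial ℝ) (a b c : ℝ) (i : ℕ) :
    (p * (C a * X ^ 3 + C b * X ^ 2 + C c)).coeff i =
      (if 3 ≤ i then p.coeff (i - 3) * a else 0) +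
      (if 2 ≤ i then p.coeff (i - 2) * b else 0) + p.coeff i * c := by
  have h3 : p * (C a * X ^ 3) = p * C a * X ^ 3 := by ring
  have h2 : p * (C b * X ^ 2) = p * C b * X ^ 2 := by ring
  rw [mul_add, mul_add, coeff_add, coeff_add, h3, h2, coeff_mul_X_pow', coeff_mul_X_pow',
    coeff_mul_C]
  simp only [coeff_mul_C]

private lemma aux_coeff_pow_nonneg (p : Polynomial ℝ) (hp : ∀ i, 0 ≤ p.coeff i) (n i : ℕ) :
    0 ≤ (p ^ n).coeff i := by
  induction n generalizing i with
  | zero => rcases i with _ | i <;> simp [coeff_one]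
  | succ n ih =>
    rw [pow_succ, coeff_mul]
    exact Finset.sum_nonneg fun x _ => mul_nonneg (ih x.1) (hp x.2)

private lemma aux_coeff_le_eval_one (p : Polynomial ℝ) (hp : ∀ i, 0 ≤ p.coeff i) (i : ℕ) :
    p.coeff i ≤ p.eval 1 := by
  have hsum : p.eval 1 = ∑ j ∈ range (p.natDegree + 1), p.coeff j := by
    rw [eval_eq_sum_range]; simp
  rcases le_or_gt i p.natDegree with h | h
  · rw [hsum]
    exact Finset.single_le_sum (fun j _ => hp j) (Finset.mem_range.mpr (by omega))
  · rw [p.coeff_eq_zero_of_natDegree_lt h, hsum]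
    exact Finset.sum_nonneg fun j _ => hp j

theorem technical_lemma_coefficients
    (q l : ℕ) (hq : 2 ≤ q) (hl : 1 ≤ l)
    (m₀ m₁ m₂ m₃ : ℝ)
    (hm₀ : 1 ≤ m₀) (hm₀' : m₀ < q)
    (hm₂ : 1 ≤ m₂) (hm₂' : m₂ < q)
    (hm₃ : 1 ≤ m₃) (hm₃' : m₃ < q)
    (hm₁ : 0 < m₁) (hm₁' : m₁ < (l : ℝ)⁻¹ * ((6 * q : ℝ) ^ l)⁻¹)
    (t : Polynomial ℝ)
    (ht : t = C m₃ * X ^ 3 + C m₂ * X ^ 2 - C m₁ * X + C m₀) :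
    0 < (t ^ l).coeff 0 ∧
    (∀ i : ℕ, 2 ≤ i → i ≤ 3 * l → 0 < (t ^ l).coeff i) ∧
    (t ^ l).coeff 1 < 0 ∧
    (∀ i : ℕ, i ≤ 3 * l → |(t ^ l).coeff i| ≤ (4 * q : ℝ) ^ l) := by
  have hq2 : (2:ℝ) ≤ (q:ℝ) := by exact_mod_cast hq
  have hl1 : (1:ℝ) ≤ (l:ℝ) := by exact_mod_cast hl
  set Q : ℝ := 3 * (q:ℝ) with hQ
  have hQ6 : (6:ℝ) ≤ Q := by rw [hQ]; linarith
  set s : Polynomial ℝ := C m₃ * X ^ 3 + C m₂ * X ^ 2 + C m₀ with hs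
  have hscoeff : ∀ j, 0 ≤ s.coeff j := by
    intro j
    rw [hs]
    simp only [coeff_add, coeff_C_mul, coeff_X_pow, coeff_C, mul_ite, mul_one, mul_zero]
    split_ifs <;> linarith
  have hsn : ∀ n i, 0 ≤ (s ^ n).coeff i := aux_coeff_pow_nonneg s hscoeff
  have hseval : s.eval 1 = m₃ + m₂ + m₀ := by rw [hs]; simp
  have hsle : ∀ n i, (s ^ n).coeff i ≤ Q ^ n := by
    intro n i
    calc (s ^ n).coeff i ≤ (s ^ n).eval 1 :=
          aux_coeff_le_eval_one _ (fun j => hsn n j) i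
    _ = (m₃ + m₂ + m₀) ^ n := by rw [eval_pow, hseval]
    _ ≤ Q ^ n := pow_le_pow_left₀ (by linarith) (by rw [hQ]; linarith) n
  -- lower bound 1 for good coefficients of s^n
  have hone : ∀ n, 1 ≤ n → ∀ i, (i = 0 ∨ (2 ≤ i ∧ i ≤ 3 * n)) → 1 ≤ (s ^ n).coeff i := by
    intro n hn
    induction n, hn using Nat.le_induction with
    | base =>
      intro i hi
      have hi' : i = 0 ∨ i = 2 ∨ i = 3 := by omega
      rw [pow_one, hs]
      simp only [coeff_add, coeff_C_mul, coeff_X_pow, coeff_C, mul_ite, mul_one, mul_zero]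
      rcases hi' with rfl | rfl | rfl <;> norm_num <;> linarith
    | succ n hn ih =>
      intro i hi
      have hrw : (s ^ (n+1)).coeff i =
          (if 3 ≤ i then (s ^ n).coeff (i - 3) * m₃ else 0) +
          (if 2 ≤ i then (s ^ n).coeff (i - 2) * m₂ else 0) + (s ^ n).coeff i * m₀ := by
        conv_lhs => rw [pow_succ, hs]
        rw [aux_coeff_mul_s]
      rw [hrw]
      have hA := hsn n (i - 3)
      have hB := hsn n (i - 2)
      have hC := hsn n i
      rcases hi with rfl | ⟨h2, h3⟩
      · rw [if_neg (by omega), if_neg (by omega)]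
        have h1 := ih 0 (Or.inl rfl)
        nlinarith
      · rcases le_or_gt i (3 * n) with hle | hgt
        · have h1 := ih i (Or.inr ⟨h2, hle⟩)
          split_ifs <;> nlinarith
        · have hi3 : i = 3*n+1 ∨ i = 3*n+2 ∨ i = 3*n+3 := by omega
          rcases hi3 with rfl | rfl | rfl
          · rw [if_pos (by omega), if_pos (by omega)]
            have he : 3*n+1-2 = 3*n-1 := by omega
            rw [he]
            have h1 := ih (3*n-1) (Or.inr ⟨by omega, by omega⟩)
            nlinarith
          · rw [if_pos (by omega), if_pos (by omega)]
            have he : 3*n+2-2 = 3*n := by omega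
            rw [he]
            have h1 := ih (3*n) (Or.inr ⟨by omega, le_refl _⟩)
            nlinarith
          · rw [if_pos (by omega), if_pos (by omega)]
            have he : 3*n+3-3 = 3*n := by omega
            rw [he]
            have h1 := ih (3*n) (Or.inr ⟨by omega, le_refl _⟩)
            nlinarith
  -- expansion of t^l
  set u : Polynomial ℝ := C (-m₁) * X with hu
  have hts : t = s + u := by rw [ht, hs, hu, map_neg]; ring
  have hterm : ∀ k i : ℕ, (s ^ k * u ^ (l - k) * ((l.choose k : ℕ) : Polynomial ℝ)).coeff i =
      if l - k ≤ i then (s ^ k).coeff (i - (l - k)) * ((-m₁) ^ (l - k) * (l.choose k : ℝ))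
      else 0 := by
    intro k i
    have hc : ((l.choose k : ℕ) : Polynomial ℝ) = C ((l.choose k : ℕ) : ℝ) := by
      simp
    have h1 : s ^ k * u ^ (l - k) * ((l.choose k : ℕ) : Polynomial ℝ) =
        s ^ k * C ((-m₁) ^ (l - k) * ((l.choose k : ℕ) : ℝ)) * X ^ (l - k) := by
      rw [hu, hc, mul_pow, ← C_pow, C_mul]
      ring
    rw [h1, coeff_mul_X_pow', coeff_mul_C]
  have hdiff : ∀ i, (t ^ l).coeff i - (s ^ l).coeff i =
      ∑ k ∈ range l, (s ^ k * u ^ (l - k) * ((l.choose k : ℕ) : Polynomial ℝ)).coeff i := by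
    intro i
    have hE : t ^ l =
        (∑ k ∈ range l, s ^ k * u ^ (l - k) * ((l.choose k : ℕ) : Polynomial ℝ)) + s ^ l := by
      rw [hts, add_pow, Finset.sum_range_succ]
      simp
    rw [hE, coeff_add, finset_sum_coeff]
    ring
  -- bounds
  have hm₁le : m₁ ≤ 1 := by
    have h2 : (1:ℝ) ≤ (6 * q : ℝ) ^ l := one_le_pow₀ (by linarith : (1:ℝ) ≤ 6*q)
    have h3 : (l:ℝ)⁻¹ ≤ 1 := by
      rw [inv_le_one_iff₀] <;> right <;> exact hl1
    have h4 : ((6 * q : ℝ) ^ l)⁻¹ ≤ 1 := by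
      rw [inv_le_one_iff₀] <;> right <;> exact h2
    have h5 : (0:ℝ) ≤ (l:ℝ)⁻¹ := by positivity
    have h6 : (0:ℝ) ≤ ((6 * q : ℝ) ^ l)⁻¹ := by positivity
    nlinarith [hm₁']
  have hterm_bound : ∀ i : ℕ, ∀ k ∈ range l,
      |(s ^ k * u ^ (l - k) * ((l.choose k : ℕ) : Polynomial ℝ)).coeff i| ≤
        2 ^ l * m₁ * Q ^ (l - 1) := by
    intro i k hk
    have hkl : k < l := Finset.mem_range.mp hk
    rw [hterm k i]
    have hQ1 : (1:ℝ) ≤ Q := by linarith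
    split_ifs with h
    · rw [abs_mul, abs_mul, abs_pow, abs_neg, abs_of_pos hm₁,
        abs_of_nonneg (hsn k _), abs_of_nonneg (by positivity : (0:ℝ) ≤ ((l.choose k : ℕ):ℝ))]
      have b1 : (s ^ k).coeff (i - (l - k)) ≤ Q ^ (l - 1) :=
        le_trans (hsle k _) (pow_le_pow_right₀ hQ1 (by omega))
      have b2 : m₁ ^ (l - k) ≤ m₁ := by
        have := pow_le_pow_of_le_one (le_of_lt hm₁) hm₁le (show 1 ≤ l - k by omega)
        simpa using this
      have b3 : ((l.choose k : ℕ) : ℝ) ≤ 2 ^ l := by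
        exact_mod_cast aux_choose_le l k
      calc (s ^ k).coeff (i - (l - k)) * (m₁ ^ (l - k) * ((l.choose k : ℕ):ℝ))
          ≤ Q ^ (l - 1) * (m₁ * 2 ^ l) := by
            apply mul_le_mul b1 (mul_le_mul b2 b3 (by positivity) (le_of_lt hm₁))
              (by positivity) (by positivity)
      _ = 2 ^ l * m₁ * Q ^ (l - 1) := by ring
    · simp only [abs_zero]
      positivity
  have hΔ : ∀ i, |(t ^ l).coeff i - (s ^ l).coeff i| ≤ 1/6 := by
    intro i
    rw [hdiff i]
    have hQpos : (0:ℝ) < Q := by linarith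
    calc |∑ k ∈ range l, (s ^ k * u ^ (l - k) * ((l.choose k : ℕ) : Polynomial ℝ)).coeff i|
        ≤ ∑ k ∈ range l, |(s ^ k * u ^ (l - k) * ((l.choose k : ℕ) : Polynomial ℝ)).coeff i| :=
          Finset.abs_sum_le_sum_abs _ _
    _ ≤ ∑ _k ∈ range l, 2 ^ l * m₁ * Q ^ (l - 1) := Finset.sum_le_sum (hterm_bound i)
    _ = (l:ℝ) * (2 ^ l * m₁ * Q ^ (l - 1)) := by
          rw [Finset.sum_const, Finset.card_range, nsmul_eq_mul]
    _ ≤ 1/6 := by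
          have hlpos : (0:ℝ) < l := by linarith
          have h6q : ((6 * q : ℝ)) ^ l = 2 ^ l * Q ^ l := by
            rw [hQ, ← mul_pow]; ring_nf
          have hql : Q ^ l = Q ^ (l - 1) * Q := by
            rw [← pow_succ]; congr 1; omega
          have hm : m₁ ≤ (l:ℝ)⁻¹ * (2 ^ l * (Q ^ (l-1) * Q))⁻¹ := by
            rw [← hql, ← h6q]; linarith
          have step : (l:ℝ) * (2 ^ l * m₁ * Q ^ (l - 1)) ≤
              (l:ℝ) * (2 ^ l * ((l:ℝ)⁻¹ * (2 ^ l * (Q ^ (l-1) * Q))⁻¹) * Q ^ (l - 1)) := by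
            gcongr
          have eq1 : (l:ℝ) * (2 ^ l * ((l:ℝ)⁻¹ * (2 ^ l * (Q ^ (l-1) * Q))⁻¹) * Q ^ (l - 1)) =
              Q⁻¹ := by
            field_simp
          have : Q⁻¹ ≤ 1/6 := by
            rw [inv_le_iff_one_le_mul₀ hQpos] <;> linarith
          rw [eq1] at step
          linarith
  -- coefficient 1
  have hc1 : (t ^ l).coeff 1 < 0 := by
    have h0 : (t ^ l).coeff 1 = eval 0 (derivative (t ^ l)) := by
      rw [← coeff_zero_eq_eval_zero, coeff_derivative]
      simp
    have hev0 : eval 0 t = m₀ := by rw [ht]; simp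
    have hdev : eval 0 (derivative t) = -m₁ := by
      rw [ht]; simp
    rw [h0, derivative_pow, eval_mul, eval_mul, eval_C, eval_pow, hev0, hdev]
    have hm0pos : (0:ℝ) < m₀ ^ (l - 1) := by positivity
    have hlpos : (0:ℝ) < (l:ℝ) := by linarith
    nlinarith [mul_pos (mul_pos hlpos hm0pos) hm₁]
  refine ⟨?_, ?_, hc1, ?_⟩
  · have h1 := hone l hl 0 (Or.inl rfl)
    have h2 := abs_le.mp (hΔ 0)
    linarith [h2.1]
  · intro i h2i h3i
    have h1 := hone l hl i (Or.inr ⟨h2i, h3i⟩)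
    have h2 := abs_le.mp (hΔ i)
    linarith [h2.1]
  · intro i _
    have h2 := hΔ i
    have h3 : |(s ^ l).coeff i| ≤ Q ^ l := by
      rw [abs_of_nonneg (hsn l i)]; exact hsle l i
    have h4 : |(t ^ l).coeff i| ≤ Q ^ l + 1/6 := by
      calc |(t ^ l).coeff i| = |((t ^ l).coeff i - (s ^ l).coeff i) + (s ^ l).coeff i| := by
            ring_nf
      _ ≤ |(t ^ l).coeff i - (s ^ l).coeff i| + |(s ^ l).coeff i| := abs_add_le _ _
      _ ≤ 1/6 + Q ^ l := by linarith
      _ = Q ^ l + 1/6 := by ring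
    have h5 : Q ^ l + ((q:ℝ)) ^ l ≤ (4 * q : ℝ) ^ l := by
      have := pow_add_pow_le (x := Q) (y := (q:ℝ)) (n := l) (by linarith) (by linarith)
        (by omega)
      have hb : Q + (q:ℝ) = 4 * q := by rw [hQ]; ring
      rwa [hb] at this
    have h6 : (2:ℝ) ≤ (q:ℝ) ^ l :=
      le_trans hq2 (le_self_pow₀ (by linarith) (by omega))
    linarith
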